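/- In an LSM tree where records can only move from lower-indexed levels to higher-indexed levels during merges, and all new writes enter at level 0 with strictly increasing timestamps, any two records with the same data key residing at different levels satisfy: the record at the lower-indexed level has a strictly larger timestamp than the record at the higher-indexed level. -/
import Mathlib


/-- A record: (key, value, timestamp). -/
abbrev LSMRecord := ℕ × ℕ × ℕ

/-- An LSM state: for each level index, a finite multiset of records. -/
abbrev LSMState := ℕ → Multiset LSMRecord

/-- One step of the LSM state machine: either a write of a fresh record into
level 0 (with a timestamp strictly larger than every timestamp currently in
the tree), or a merge of two adjacent levels into the higher-indexed one. -/
inductive LSMStep : LSMState → LSMState → Prop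
  | write (s : LSMState) (r : LSMRecord)
      (hfresh : ∀ i, ∀ r' ∈ s i, r'.2.2 < r.2.2) :
      LSMStep s (fun j => if j = 0 then r ::ₘ s 0 else s j)
  | merge (s : LSMState) (i : ℕ) :
      LSMStep s (fun j => if j = i then 0
                  else if j = i + 1 then s i + s (i + 1) else s j)

/-- Reachability from the empty initial state. -/
def LSMReachable (s : LSMState) : Prop :=
  Relation.ReflTransGen LSMStep (fun _ => (0 : Multiset LSMRecord)) s

lemma lsm_inv (s : LSMState) (hs : LSMReachable s) :
    ∀ i j, i < j → ∀ r ∈ s i, ∀ r' ∈ s j, r'.2.2 < r.2.2 := by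
  induction hs with
  | refl => intro i j _ r hr; simp at hr
  | tail hbc hstep ih =>
    cases hstep with
    | write r0 hfresh =>
      intro i j hij r hr r' hr'
      simp only at hr hr'
      have hj0 : j ≠ 0 := by omega
      rw [if_neg hj0] at hr'
      by_cases hi : i = 0
      · subst hi
        rw [if_pos rfl] at hr
        rcases Multiset.mem_cons.mp hr with h | h
        · subst h; exact hfresh j r' hr'
        · exact ih 0 j hij r h r' hr'
      · rw [if_neg hi] at hr
        exact ih i j hij r hr r' hr'
    | merge k =>
      intro i j hij r hr r' hr'
      simp only at hr hr'
      by_cases hik : i = k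
      · simp [hik] at hr
      · rw [if_neg hik] at hr
        by_cases hjk : j = k
        · simp [hjk] at hr'
        · rw [if_neg hjk] at hr'
          by_cases hi1 : i = k + 1
          · rw [if_pos hi1] at hr
            have hj1 : j ≠ k + 1 := by omega
            rw [if_neg hj1] at hr'
            rcases Multiset.mem_add.mp hr with h | h
            · exact ih k j (by omega) r h r' hr'
            · exact ih (k+1) j (by omega) r h r' hr'
          · rw [if_neg hi1] at hr
            by_cases hj1 : j = k + 1
            · rw [if_pos hj1] at hr'
              rcases Multiset.mem_add.mp hr' with h | h
              · exact ih i k (by omega) r hr r' h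
              · exact ih i (k+1) (by omega) r hr r' h
            · rw [if_neg hj1] at hr'
              exact ih i j hij r hr r' hr'

/-- In any reachable LSM state, for two records with the same key at different
levels, the record at the lower-indexed level has a strictly larger timestamp. -/
theorem lsm_cross_level_freshness (s : LSMState) (hs : LSMReachable s)
    (i j : ℕ) (hij : i < j) (r r' : LSMRecord)
    (hr : r ∈ s i) (hr' : r' ∈ s j) (hkey : r.1 = r'.1) :
    r'.2.2 < r.2.2 :=
  lsm_inv s hs i j hij r hr r' hr'
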